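/- Let G, H, K be finite groups, let X be a left-free (G,H)-biset and Y a left-free (H,K)-biset. Let U ≤ G, W ≤ K and let γ: W → U be a surjective group homomorphism. Then |(X ×_H Y)^{⊲(U,γ,W)}| = (1/|H|) · Σ_{V ≤ H} Σ_{(α,β) ∈ E(U,V)×E(V,W), α∘β = γ} |X^{⊲(U,α,V)}| · |Y^{⊲(V,β,W)}|, where the outer sum runs over all subgroups V of H. -/

import Mathlib

open scoped Classical
set_option maxHeartbeats 1000000

private lemma stmt4.uY {H K Y : Type*} [Group H] [Group K] [MulAction (H × K) Y]
    (hY : ∀ (y : Y) (h : H), ((h, (1 : K)) : H × K) • y = y → h = 1)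
    {y : Y} {k : K} {h h' : H} (h1 : ((h, k) : H × K) • y = y)
    (h2 : ((h', k) : H × K) • y = y) : h = h' := by
  have key : ((h * h'⁻¹, (1:K)) : H × K) • y = y := by
    conv_lhs => rw [← h2]
    rw [smul_smul, Prod.mk_mul_mk]
    simpa [inv_mul_cancel_right] using h1
  exact mul_inv_eq_one.mp (hY y _ key)

private lemma stmt4.uX {G H X : Type*} [Group G] [Group H] [MulAction (G × H) X]
    (hX : ∀ (x : X) (g : G), ((g, (1 : H)) : G × H) • x = x → g = 1)
    {x : X} {h : H} {g g' : G} (h1 : ((g, h) : G × H) • x = x)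
    (h2 : ((g', h) : G × H) • x = x) : g = g' := by
  have key : ((g * g'⁻¹, (1:H)) : G × H) • x = x := by
    conv_lhs => rw [← h2]
    rw [smul_smul, Prod.mk_mul_mk]
    simpa [inv_mul_cancel_right] using h1
  exact mul_inv_eq_one.mp (hX x _ key)

private lemma stmt4.finite_hom {A B : Type*} [Group A] [Group B] [Finite A] [Finite B] :
    Finite (A →* B) :=
  Finite.of_injective (fun f => (f : A → B)) DFunLike.coe_injective

private lemma stmt4.exists_trip {G H K : Type*} [Group G] [Group H] [Group K]
    {X Y : Type*} [MulAction (G × H) X] [MulAction (H × K) Y]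
    (hX : ∀ (x : X) (g : G), ((g, (1 : H)) : G × H) • x = x → g = 1)
    (hY : ∀ (y : Y) (h : H), ((h, (1 : K)) : H × K) • y = y → h = 1)
    {W : Subgroup K} (γ : ↥W →* G) {p : X × Y}
    (hp : ∀ w : ↥W, ∃ h : H, ((γ w, h) : G × H) • p.1 = p.1 ∧
      ((h, (w : K)) : H × K) • p.2 = p.2) :
    ∃ (V : Subgroup H) (α : ↥V →* G) (β : ↥W →* ↥V),
      (α.range = γ.range ∧ Function.Surjective β ∧ α.comp β = γ) ∧
      (∀ v : ↥V, ((α v, (v : H)) : G × H) • p.1 = p.1) ∧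
      (∀ w : ↥W, ((((β w : ↥V) : H), (w : K)) : H × K) • p.2 = p.2) := by
  set φ : ↥W → H := fun w => Classical.choose (hp w) with hφ
  have φspec : ∀ w : ↥W, ((γ w, φ w) : G × H) • p.1 = p.1 ∧
      ((φ w, (w : K)) : H × K) • p.2 = p.2 := fun w => Classical.choose_spec (hp w)
  have φmul : ∀ w w' : ↥W, φ (w * w') = φ w * φ w' := by
    intro w w'
    refine stmt4.uY hY (φspec (w * w')).2 ?_
    have : (((w * w' : ↥W) : K)) = (w : K) * (w' : K) := rfl
    rw [this, ← Prod.mk_mul_mk, mul_smul, (φspec w').2, (φspec w).2]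
  set φh : ↥W →* H := MonoidHom.mk' φ φmul with hφh
  set V : Subgroup H := φh.range with hV
  set β : ↥W →* ↥V := φh.rangeRestrict with hβ
  have βsurj : Function.Surjective β := φh.rangeRestrict_surjective
  have βcoe : ∀ w : ↥W, ((β w : ↥V) : H) = φ w := fun w => rfl
  have keyγ : ∀ w w' : ↥W, φ w = φ w' → γ w = γ w' := by
    intro w w' hww
    refine stmt4.uX hX (φspec w).1 ?_
    rw [hww]; exact (φspec w').1
  have α0 : ∀ v : ↥V, ∃ w : ↥W, φh w = (v : H) := fun v => MonoidHom.mem_range.mp v.2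
  set α0f : ↥V → G := fun v => γ (Classical.choose (α0 v)) with hα0f
  have α0spec : ∀ w : ↥W, α0f (β w) = γ w := by
    intro w
    refine keyγ _ _ ?_
    exact Classical.choose_spec (α0 (β w))
  have α0mul : ∀ v v' : ↥V, α0f (v * v') = α0f v * α0f v' := by
    intro v v'
    obtain ⟨w, rfl⟩ := βsurj v
    obtain ⟨w', rfl⟩ := βsurj v'
    rw [← map_mul, α0spec, α0spec, α0spec, map_mul]
  set α : ↥V →* G := MonoidHom.mk' α0f α0mul with hα
  have αβ : α.comp β = γ := MonoidHom.ext α0spec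
  refine ⟨V, α, β, ⟨?_, βsurj, αβ⟩, ?_, ?_⟩
  · ext g
    simp only [MonoidHom.mem_range]
    constructor
    · rintro ⟨v, rfl⟩
      obtain ⟨w, rfl⟩ := βsurj v
      exact ⟨w, (α0spec w).symm⟩
    · rintro ⟨w, rfl⟩
      exact ⟨β w, α0spec w⟩
  · intro v
    obtain ⟨w, rfl⟩ := βsurj v
    have : α (β w) = γ w := α0spec w
    rw [this, βcoe]
    exact (φspec w).1
  · intro w
    rw [βcoe]
    exact (φspec w).2

private lemma stmt4.trip_unique {G H K : Type*} [Group G] [Group H] [Group K]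
    {X Y : Type*} [MulAction (G × H) X] [MulAction (H × K) Y]
    (hY : ∀ (y : Y) (h : H), ((h, (1 : K)) : H × K) • y = y → h = 1)
    {W : Subgroup K} (γ : ↥W →* G) {p : X × Y}
    {V V' : Subgroup H} {α : ↥V →* G} {α' : ↥V' →* G} {β : ↥W →* ↥V} {β' : ↥W →* ↥V'}
    (hs : Function.Surjective β) (hs' : Function.Surjective β')
    (hc : α.comp β = γ) (hc' : α'.comp β' = γ)
    (hfy : ∀ w : ↥W, ((((β w : ↥V) : H), (w : K)) : H × K) • p.2 = p.2)
    (hfy' : ∀ w : ↥W, ((((β' w : ↥V') : H), (w : K)) : H × K) • p.2 = p.2) :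
    (⟨V, α, β⟩ : Σ V : Subgroup H, (↥V →* G) × (↥W →* ↥V)) = ⟨V', α', β'⟩ := by
  have hβH : ∀ w : ↥W, ((β w : ↥V) : H) = ((β' w : ↥V') : H) :=
    fun w => stmt4.uY hY (hfy w) (hfy' w)
  have hVV : V = V' := by
    refine le_antisymm ?_ ?_
    · intro v hv
      obtain ⟨w, hw⟩ := hs ⟨v, hv⟩
      have : v = ((β' w : ↥V') : H) := by rw [← hβH, hw]
      rw [this]; exact (β' w).2
    · intro v hv
      obtain ⟨w, hw⟩ := hs' ⟨v, hv⟩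
      have : v = ((β w : ↥V) : H) := by rw [hβH, hw]
      rw [this]; exact (β w).2
  subst hVV
  have hββ : β = β' := MonoidHom.ext fun w => Subtype.ext (hβH w)
  subst hββ
  have hαα : α = α' := by
    ext v
    obtain ⟨w, rfl⟩ := hs v
    have e1 : α (β w) = γ w := DFunLike.congr_fun hc w
    have e2 : α' (β w) = γ w := DFunLike.congr_fun hc' w
    rw [e1, e2]
  rw [hαα]

/-- The `H`-orbit relation on `X × Y` whose quotient is the tensor product
`X ×_H Y` of a `(G,H)`-biset `X` and an `(H,K)`-biset `Y`
(`h • (x,y) = (x h⁻¹, h y)`, i.e. `((1,h) • x, (h,1) • y)`). -/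
def tensSetoid (G H K X Y : Type*) [Group G] [Group H] [Group K]
    [MulAction (G × H) X] [MulAction (H × K) Y] : Setoid (X × Y) where
  r a b := ∃ h : H, ((((1 : G), h) : G × H) • a.1, ((h, (1 : K)) : H × K) • a.2) = b
  iseqv := by
    constructor
    · intro a; exact ⟨1, Prod.ext (one_smul (G × H) _) (one_smul (H × K) _)⟩
    · rintro a b ⟨h, rfl⟩
      exact ⟨h⁻¹, by simp [smul_smul]; exact Prod.ext (one_smul (G × H) _) (one_smul (H × K) _)⟩
    · rintro a b c ⟨h, rfl⟩ ⟨h', rfl⟩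
      exact ⟨h' * h, by simp [smul_smul]⟩

private lemma stmt4.cardA {G H K : Type*} [Group G] [Group H] [Group K]
    (X Y : Type*) [MulAction (G × H) X] [MulAction (H × K) Y]
    (hY : ∀ (y : Y) (h : H), ((h, (1 : K)) : H × K) • y = y → h = 1)
    {W : Subgroup K} (γ : ↥W →* G) :
    Nat.card {p : X × Y // ∀ w : ↥W, ∃ h : H, ((γ w, h) : G × H) • p.1 = p.1 ∧
        ((h, (w : K)) : H × K) • p.2 = p.2}
    = Nat.card {q : Quotient (tensSetoid G H K X Y) |
        ∀ (w : ↥W) (x : X) (y : Y), Quotient.mk (tensSetoid G H K X Y) (x, y) = q →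
          Quotient.mk (tensSetoid G H K X Y)
            (((γ w, (1 : H)) : G × H) • x, (((1 : H), (w : K)) : H × K) • y) = q}
      * Nat.card H := by
  set S := tensSetoid G H K X Y with hS
  set P : X × Y → Prop := fun p => ∀ w : ↥W, ∃ h : H, ((γ w, h) : G × H) • p.1 = p.1 ∧
      ((h, (w : K)) : H × K) • p.2 = p.2 with hP
  set F : Set (Quotient S) := {q | ∀ (w : ↥W) (x : X) (y : Y),
      Quotient.mk S (x, y) = q → Quotient.mk S
        (((γ w, (1 : H)) : G × H) • x, (((1 : H), (w : K)) : H × K) • y) = q} with hF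
  set act : H → X × Y → X × Y :=
    fun h p => (((((1 : G), h) : G × H)) • p.1, (((h, (1 : K)) : H × K)) • p.2) with hact
  have act_act : ∀ (a b : H) (p : X × Y), act a (act b p) = act (a * b) p := by
    intro a b p
    simp only [hact, Prod.mk.injEq]
    constructor <;> rw [smul_smul, Prod.mk_mul_mk] <;> rw [one_mul]
  have act_one : ∀ p : X × Y, act 1 p = p := by
    intro p; simp [hact]; exact Prod.ext (one_smul (G × H) _) (one_smul (H × K) _)
  have rel_iff : ∀ a b : X × Y, (Quotient.mk S a = Quotient.mk S b) ↔ ∃ h, act h a = b := by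
    intro a b
    constructor
    · intro h; exact Quotient.exact h
    · intro h; exact Quotient.sound h
  have P_act : ∀ (h : H) (p : X × Y), P p → P (act h p) := by
    intro h p hp w
    obtain ⟨h', hw1, hw2⟩ := hp w
    refine ⟨h * h' * h⁻¹, ?_, ?_⟩
    · show ((γ w, h * h' * h⁻¹) : G × H) • (((1:G), h) : G × H) • p.1
        = (((1:G), h) : G × H) • p.1
      conv_rhs => rw [← hw1]
      rw [smul_smul, smul_smul, Prod.mk_mul_mk, Prod.mk_mul_mk, mul_one, one_mul,
        inv_mul_cancel_right]
    · show ((h * h' * h⁻¹, (w : K)) : H × K) • ((h, (1:K)) : H × K) • p.2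
        = ((h, (1:K)) : H × K) • p.2
      conv_rhs => rw [← hw2]
      rw [smul_smul, smul_smul, Prod.mk_mul_mk, Prod.mk_mul_mk, mul_one, one_mul,
        inv_mul_cancel_right]
  have P_out : ∀ q : Quotient S, q ∈ F → P q.out := by
    intro q hq w
    have h1 : Quotient.mk S (q.out.1, q.out.2) = q := by
      rw [Prod.mk.eta, Quotient.out_eq]
    have h2 := (hq w q.out.1 q.out.2 h1).trans h1.symm
    obtain ⟨h, hh⟩ := (rel_iff _ _).mp h2
    rw [Prod.ext_iff] at hh
    obtain ⟨hh1, hh2⟩ := hh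
    refine ⟨h, ?_, ?_⟩
    · have h3 : ((((1:G), h) : G × H)) • (((γ w, (1:H)) : G × H)) • q.out.1 = q.out.1 := hh1
      rwa [smul_smul, Prod.mk_mul_mk, one_mul, mul_one] at h3
    · have h3 : (((h, (1:K)) : H × K)) • ((((1:H), (w : K)) : H × K)) • q.out.2 = q.out.2 := hh2
      rwa [smul_smul, Prod.mk_mul_mk, one_mul, mul_one] at h3
  have mk_mem_F : ∀ p : X × Y, P p → Quotient.mk S p ∈ F := by
    intro p hp w x y hxy
    obtain ⟨h, hh⟩ := (rel_iff _ _).mp hxy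
    rw [Prod.ext_iff] at hh
    obtain ⟨hh1, hh2⟩ := hh
    have hh1' : ((((1:G), h) : G × H)) • x = p.1 := hh1
    have hh2' : (((h, (1:K)) : H × K)) • y = p.2 := hh2
    obtain ⟨hw, hw1, hw2⟩ := hp w
    refine (rel_iff _ _).mpr ⟨hw * h, ?_⟩
    simp only [hact]
    refine Prod.ext ?_ ?_
    · show ((((1:G), hw * h) : G × H)) • (((γ w, (1:H)) : G × H)) • x = (p.1, p.2).1
      conv_rhs => rw [Prod.mk.eta, ← hw1, ← hh1']
      rw [smul_smul, smul_smul]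
      simp [Prod.mk_mul_mk]
    · show ((((hw * h), (1:K)) : H × K)) • (((((1:H), (w : K))) : H × K)) • y = (p.1, p.2).2
      conv_rhs => rw [Prod.mk.eta, ← hw2, ← hh2']
      rw [smul_smul, smul_smul]
      simp [Prod.mk_mul_mk]
  have hfP : ∀ (z : F × H), P (act z.2 (z.1 : Quotient S).out) :=
    fun z => P_act z.2 _ (P_out _ z.1.2)
  set f : F × H → {p : X × Y // P p} := fun z => ⟨act z.2 (z.1 : Quotient S).out, hfP z⟩
    with hf
  have hbij : Function.Bijective f := by
    constructor
    · rintro ⟨q, h⟩ ⟨q', h'⟩ hqq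
      have he : act h (q : Quotient S).out = act h' (q' : Quotient S).out :=
        congrArg Subtype.val hqq
      have hq : q = q' := by
        have : Quotient.mk S (q : Quotient S).out = Quotient.mk S (q' : Quotient S).out := by
          refine (rel_iff _ _).mpr ⟨h'⁻¹ * h, ?_⟩
          rw [← act_act, he, act_act, inv_mul_cancel, act_one]
        rw [Quotient.out_eq, Quotient.out_eq] at this
        exact Subtype.ext this
      subst hq
      have he2 : ((h, (1:K)) : H × K) • (q : Quotient S).out.2
          = ((h', (1:K)) : H × K) • (q : Quotient S).out.2 :=
        congrArg Prod.snd he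
      have : ((h'⁻¹ * h, (1:K)) : H × K) • (q : Quotient S).out.2
          = (q : Quotient S).out.2 := by
        have := congrArg (fun z => ((h'⁻¹, (1:K)) : H × K) • z) he2
        simp only [smul_smul, Prod.mk_mul_mk, inv_mul_cancel, mul_one] at this
        rw [this]
        have : ((1 : H), (1:K)) = (1 : H × K) := rfl
        rw [this, one_smul]
      have := hY _ _ this
      rw [Prod.mk.injEq]
      exact ⟨rfl, (inv_mul_eq_one.mp this).symm⟩
    · rintro ⟨p, hp⟩
      have hmem : Quotient.mk S p ∈ F := mk_mem_F p hp
      have : Quotient.mk S (Quotient.mk S p).out = Quotient.mk S p := Quotient.out_eq _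
      obtain ⟨h, hh⟩ := (rel_iff _ _).mp this
      exact ⟨(⟨⟨Quotient.mk S p, hmem⟩, h⟩ : F × H), Subtype.ext hh⟩
  have := Nat.card_eq_of_bijective f hbij
  rw [Nat.card_prod] at this
  exact this.symm

private lemma stmt4.cardB {G H K : Type*} [Group G] [Group H] [Group K]
    [Finite G] [Finite H] [Finite K]
    (X Y : Type*) [Finite X] [Finite Y] [MulAction (G × H) X] [MulAction (H × K) Y]
    (hX : ∀ (x : X) (g : G), ((g, (1 : H)) : G × H) • x = x → g = 1)
    (hY : ∀ (y : Y) (h : H), ((h, (1 : K)) : H × K) • y = y → h = 1)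
    {W : Subgroup K} (γ : ↥W →* G) :
    (Nat.card {p : X × Y // ∀ w : ↥W, ∃ h : H, ((γ w, h) : G × H) • p.1 = p.1 ∧
        ((h, (w : K)) : H × K) • p.2 = p.2} : ℚ)
    = ∑ᶠ (V : Subgroup H), ∑ᶠ (α : ↥V →* G), ∑ᶠ (β : ↥W →* ↥V),
        (if α.range = γ.range ∧ Function.Surjective β ∧ α.comp β = γ then
          (Nat.card {x : X | ∀ v : ↥V, ((α v, (v : H)) : G × H) • x = x} : ℚ) *
          (Nat.card {y : Y | ∀ w : ↥W, (((β w : ↥V) : H), (w : K)) • y = y} : ℚ)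
        else 0) := by
  classical
  letI : Fintype X := Fintype.ofFinite X
  letI : Fintype Y := Fintype.ofFinite Y
  letI : Fintype (Subgroup H) := Fintype.ofFinite _
  letI instFA : ∀ V : Subgroup H, Fintype (↥V →* G) := fun V =>
    @Fintype.ofFinite _ (stmt4.finite_hom)
  letI instFB : ∀ V : Subgroup H, Fintype (↥W →* ↥V) := fun V =>
    @Fintype.ofFinite _ (stmt4.finite_hom)
  set D : (Σ V : Subgroup H, (↥V →* G) × (↥W →* ↥V)) → Type _ := fun t =>
    {p : X × Y // (t.2.1.range = γ.range ∧ Function.Surjective t.2.2 ∧ t.2.1.comp t.2.2 = γ) ∧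
      (∀ v : ↥t.1, ((t.2.1 v, (v : H)) : G × H) • p.1 = p.1) ∧
      (∀ w : ↥W, ((((t.2.2 w : ↥t.1) : H), (w : K)) : H × K) • p.2 = p.2)} with hD
  have hΨP : ∀ z : Σ t, D t, ∀ w : ↥W,
      ∃ h : H, ((γ w, h) : G × H) • (z.2 : X × Y).1 = (z.2 : X × Y).1 ∧
        ((h, (w : K)) : H × K) • (z.2 : X × Y).2 = (z.2 : X × Y).2 := by
    rintro ⟨⟨V, α, β⟩, ⟨p, ⟨⟨hr, hsurj, hcomp⟩, hfx, hfy⟩⟩⟩ w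
    refine ⟨((β w : ↥V) : H), ?_, hfy w⟩
    have : γ w = α (β w) := (DFunLike.congr_fun hcomp w).symm
    rw [this]
    exact hfx (β w)
  set Ψ : (Σ t, D t) → {p : X × Y // ∀ w : ↥W, ∃ h : H, ((γ w, h) : G × H) • p.1 = p.1 ∧
      ((h, (w : K)) : H × K) • p.2 = p.2} := fun z => ⟨(z.2 : X × Y), hΨP z⟩ with hΨ
  have hbij : Function.Bijective Ψ := by
    constructor
    · rintro ⟨⟨V, α, β⟩, ⟨p, hp⟩⟩ ⟨⟨V', α', β'⟩, ⟨p', hp'⟩⟩ hz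
      have hpp : p = p' := congrArg Subtype.val hz
      subst hpp
      have ht : (⟨V, α, β⟩ : Σ V : Subgroup H, (↥V →* G) × (↥W →* ↥V)) = ⟨V', α', β'⟩ :=
        stmt4.trip_unique hY γ hp.1.2.1 hp'.1.2.1 hp.1.2.2 hp'.1.2.2 hp.2.2 hp'.2.2
      have key : ∀ (t t' : Σ V : Subgroup H, (↥V →* G) × (↥W →* ↥V)) (_ : t = t')
          (d : D t) (d' : D t'), ((d : X × Y) = (d' : X × Y)) →
          (⟨t, d⟩ : Σ t, D t) = ⟨t', d'⟩ := by
        rintro t t' rfl d d' hdd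
        exact congrArg _ (Subtype.ext hdd)
      exact key _ _ ht ⟨p, hp⟩ ⟨p, hp'⟩ rfl
    · rintro ⟨p, hp⟩
      obtain ⟨V, α, β, hgood, hfx, hfy⟩ := stmt4.exists_trip hX hY γ hp
      exact ⟨⟨⟨V, α, β⟩, ⟨p, ⟨hgood, hfx, hfy⟩⟩⟩, rfl⟩
  have hcard : Nat.card {p : X × Y // ∀ w : ↥W, ∃ h : H, ((γ w, h) : G × H) • p.1 = p.1 ∧
      ((h, (w : K)) : H × K) • p.2 = p.2} = ∑ t, Fintype.card (D t) := by
    rw [← Nat.card_eq_of_bijective Ψ hbij, Nat.card_eq_fintype_card, Fintype.card_sigma]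
  have hterm : ∀ t : Σ V : Subgroup H, (↥V →* G) × (↥W →* ↥V),
      (Fintype.card (D t) : ℚ) =
        (if t.2.1.range = γ.range ∧ Function.Surjective t.2.2 ∧ t.2.1.comp t.2.2 = γ then
          (Nat.card {x : X | ∀ v : ↥t.1, ((t.2.1 v, (v : H)) : G × H) • x = x} : ℚ) *
          (Nat.card {y : Y | ∀ w : ↥W, (((t.2.2 w : ↥t.1) : H), (w : K)) • y = y} : ℚ)
        else 0) := by
    intro t
    by_cases hg : t.2.1.range = γ.range ∧ Function.Surjective t.2.2 ∧ t.2.1.comp t.2.2 = γ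
    · rw [if_pos hg]
      have e1 : D t ≃ {p : X × Y // (∀ v : ↥t.1, ((t.2.1 v, (v : H)) : G × H) • p.1 = p.1) ∧
          (∀ w : ↥W, ((((t.2.2 w : ↥t.1) : H), (w : K)) : H × K) • p.2 = p.2)} :=
        Equiv.subtypeEquivRight (fun p => and_iff_right hg)
      have e2 := e1.trans (Equiv.subtypeProdEquivProd
        (p := fun x : X => ∀ v : ↥t.1, ((t.2.1 v, (v : H)) : G × H) • x = x)
        (q := fun y : Y => ∀ w : ↥W, ((((t.2.2 w : ↥t.1) : H), (w : K)) : H × K) • y = y))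
      rw [← Nat.card_eq_fintype_card, Nat.card_congr e2, Nat.card_prod]
      push_cast
      rfl
    · rw [if_neg hg]
      have : IsEmpty (D t) := ⟨fun p => hg p.2.1⟩
      rw [← Nat.card_eq_fintype_card, Nat.card_of_isEmpty]
      norm_num
  rw [finsum_eq_sum_of_fintype]
  have step : ∀ V : Subgroup H,
      (∑ᶠ (α : ↥V →* G), ∑ᶠ (β : ↥W →* ↥V),
        (if α.range = γ.range ∧ Function.Surjective β ∧ α.comp β = γ then
          (Nat.card {x : X | ∀ v : ↥V, ((α v, (v : H)) : G × H) • x = x} : ℚ) *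
          (Nat.card {y : Y | ∀ w : ↥W, (((β w : ↥V) : H), (w : K)) • y = y} : ℚ)
        else 0))
      = ∑ pr : (↥V →* G) × (↥W →* ↥V), (Fintype.card (D ⟨V, pr⟩) : ℚ) := by
    intro V
    rw [finsum_eq_sum_of_fintype, Fintype.sum_prod_type]
    refine Finset.sum_congr rfl fun α _ => ?_
    rw [finsum_eq_sum_of_fintype]
    refine Finset.sum_congr rfl fun β _ => ?_
    exact (hterm ⟨V, α, β⟩).symm
  calc (Nat.card {p : X × Y // ∀ w : ↥W, ∃ h : H, ((γ w, h) : G × H) • p.1 = p.1 ∧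
      ((h, (w : K)) : H × K) • p.2 = p.2} : ℚ)
      = ((∑ t, Fintype.card (D t) : ℕ) : ℚ) := by rw [hcard]
    _ = ∑ t : Σ V : Subgroup H, (↥V →* G) × (↥W →* ↥V), (Fintype.card (D t) : ℚ) := by
        push_cast; rfl
    _ = ∑ V : Subgroup H, ∑ pr : (↥V →* G) × (↥W →* ↥V), (Fintype.card (D ⟨V, pr⟩) : ℚ) := by
        rw [← Finset.univ_sigma_univ, Finset.sum_sigma]
    _ = _ := by
        refine (Finset.sum_congr rfl fun V _ => ?_).symm
        exact step V

/-- for left-free bisets `X` (a `(G,H)`-biset) and `Y` (an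
`(H,K)`-biset), subgroups `U ≤ G`, `W ≤ K` and a surjective homomorphism
`γ : W → U` (encoded as `γ : ↥W →* G` with `γ.range = U`):
`|(X ×_H Y)^{⊲(U,γ,W)}| = (1/|H|) · Σ_{V ≤ H} Σ_{(α,β) ∈ E(U,V)×E(V,W), α∘β=γ}
|X^{⊲(U,α,V)}|·|Y^{⊲(V,β,W)}|`.  Here `X ×_H Y` is the quotient of `X × Y` by
`tensSetoid`, on which `(g,k)` acts by `[x,y] ↦ [(g,1)•x, (1,k)•y]`, and
`E(U,V)` is encoded by homomorphisms `α : ↥V →* G` with `α.range = U`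
(resp. surjective homomorphisms `β : ↥W →* ↥V`). -/
theorem stmt4 {G H K : Type*} [Group G] [Group H] [Group K]
    [Finite G] [Finite H] [Finite K]
    (X Y : Type*) [Finite X] [Finite Y] [MulAction (G × H) X] [MulAction (H × K) Y]
    (hX : ∀ (x : X) (g : G), ((g, (1 : H)) : G × H) • x = x → g = 1)
    (hY : ∀ (y : Y) (h : H), ((h, (1 : K)) : H × K) • y = y → h = 1)
    (U : Subgroup G) (W : Subgroup K) (γ : ↥W →* G) (hγ : γ.range = U) :
    (Nat.card {q : Quotient (tensSetoid G H K X Y) |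
        ∀ (w : ↥W) (x : X) (y : Y), Quotient.mk (tensSetoid G H K X Y) (x, y) = q →
          Quotient.mk (tensSetoid G H K X Y)
            (((γ w, (1 : H)) : G × H) • x, (((1 : H), (w : K)) : H × K) • y) = q} : ℚ)
    = (1 / (Nat.card H : ℚ)) *
      ∑ᶠ (V : Subgroup H), ∑ᶠ (α : ↥V →* G), ∑ᶠ (β : ↥W →* ↥V),
        (if α.range = U ∧ Function.Surjective β ∧ α.comp β = γ then
          (Nat.card {x : X | ∀ v : ↥V, ((α v, (v : H)) : G × H) • x = x} : ℚ) *
          (Nat.card {y : Y | ∀ w : ↥W, (((β w : ↥V) : H), (w : K)) • y = y} : ℚ)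
        else 0) := by
  subst hγ
  have hA := stmt4.cardA X Y hY γ
  have hB := stmt4.cardB X Y hX hY γ
  rw [← hB, hA]
  have hH : (Nat.card H : ℚ) ≠ 0 := by
    have : 0 < Nat.card H := Nat.card_pos
    exact_mod_cast this.ne'
  push_cast
  field_simp
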